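/- Let σ > 0, λ > 0, let x0 : ℕ → ℝ be a fixed real sequence satisfying (Σ_{i=1}^P x0_i⁴)^{1/4} = o(P^{1/2}) as P → ∞, let (W_i)_{i∈ℕ} be i.i.d. centered Gaussian random variables of variance σ², and set Y_i = x0_i + W_i. Let h : ℕ → (0,∞) satisfy h(P) → 0 and 1/(P·h(P)) → 0 as P → ∞. Then Var[(1/P)·SCORE((Y_1,…,Y_P), λ, h(P))] → 0 as P → ∞. -/

import Mathlib

open MeasureTheory ProbabilityTheory Filter Real

/-- Scalar hard thresholding at threshold `lam`. -/
noncomputable def HT (lam y : ℝ) : ℝ := if |y| < lam then 0 else y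

/-- The DOF estimator `EDOF_HT(y, λ, h)` for hard thresholding. -/
noncomputable def EDOF (σ lam h : ℝ) (P : ℕ) (y : ℕ → ℝ) : ℝ :=
  (∑ i ∈ Finset.range P, if lam < |y i| then (1 : ℝ) else 0) +
    lam * Real.sqrt (σ ^ 2 + h ^ 2) / (Real.sqrt (2 * π) * σ * h) *
      ∑ i ∈ Finset.range P,
        (Real.exp (-(y i + lam) ^ 2 / (2 * h ^ 2)) +
          Real.exp (-(y i - lam) ^ 2 / (2 * h ^ 2)))

/-- Covariance of two real random variables. -/
noncomputable def cov {Ω : Type*} [MeasurableSpace Ω] (μ : Measure Ω) (X Y : Ω → ℝ) : ℝ :=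
  ∫ ω, (X ω - ∫ x, X x ∂μ) * (Y ω - ∫ x, Y x ∂μ) ∂μ

/-- The degrees of freedom of hard thresholding:
`DOF_HT(x0, λ) = ∑ i Cov(Y i, HT(Y i, λ)) / σ²` where `Y` is the (random) observation. -/
noncomputable def DOF {Ω : Type*} [MeasurableSpace Ω] (μ : Measure Ω) (σ lam : ℝ) (P : ℕ)
    (Y : ℕ → Ω → ℝ) : ℝ :=
  ∑ i ∈ Finset.range P, cov μ (Y i) (fun ω => HT lam (Y i ω)) / σ ^ 2

/-- The Stein COnsistent Risk Estimator:
`SCORE(y, λ, h) = ‖y − HT(y,λ)‖² − P σ² + 2 σ² EDOF_HT(y, λ, h)`. -/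
noncomputable def SCORE (σ lam h : ℝ) (P : ℕ) (y : ℕ → ℝ) : ℝ :=
  (∑ i ∈ Finset.range P, (y i - HT lam (y i)) ^ 2) - P * σ ^ 2 +
    2 * σ ^ 2 * EDOF σ lam h P y


/-- per-coordinate summand of SCORE (without the `-Pσ²` constant). -/
noncomputable def gco (σ lam h y : ℝ) : ℝ :=
  (y - HT lam y) ^ 2 + 2 * σ ^ 2 * ((if lam < |y| then (1:ℝ) else 0) +
    lam * Real.sqrt (σ ^ 2 + h ^ 2) / (Real.sqrt (2 * π) * σ * h) *
      (Real.exp (-(y + lam) ^ 2 / (2 * h ^ 2)) + Real.exp (-(y - lam) ^ 2 / (2 * h ^ 2))))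

lemma score_eq (σ lam h : ℝ) (P : ℕ) (y : ℕ → ℝ) :
    SCORE σ lam h P y = (∑ i ∈ Finset.range P, gco σ lam h (y i)) - P * σ ^ 2 := by
  unfold SCORE EDOF gco
  simp only [Finset.sum_add_distrib, Finset.mul_sum, mul_add]
  ring

lemma measurable_gco (σ lam h : ℝ) : Measurable (gco σ lam h) := by
  unfold gco HT
  have h1 : Measurable fun y : ℝ => if |y| < lam then (0:ℝ) else y :=
    Measurable.ite (measurableSet_lt (by fun_prop) measurable_const) measurable_const
      measurable_id
  have h2 : Measurable fun y : ℝ => if lam < |y| then (1:ℝ) else 0 :=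
    Measurable.ite (measurableSet_lt measurable_const (by fun_prop)) measurable_const
      measurable_const
  fun_prop

lemma sub_HT_sq_le {lam : ℝ} (hlam : 0 < lam) (y : ℝ) : (y - HT lam y) ^ 2 ≤ lam ^ 2 := by
  unfold HT
  split_ifs with hy
  · have := abs_lt.mp hy
    nlinarith
  · simp [sq_nonneg, hlam.le, sq_nonneg lam]

lemma gauss_exp_bound {σ : ℝ} (hσ : 0 < σ) {h : ℝ} (hh : 0 < h) (c : ℝ) :
    ∫ w, Real.exp (-(w + c) ^ 2 / h ^ 2) ∂(gaussianReal 0 ⟨σ ^ 2, sq_nonneg σ⟩)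
      ≤ h * Real.sqrt π / (Real.sqrt (2 * π) * σ) := by
  set v : NNReal := ⟨σ ^ 2, sq_nonneg σ⟩ with hv_def
  have hv : v ≠ 0 := by
    intro hcon
    have : (v : ℝ) = 0 := by rw [hcon]; simp
    rw [hv_def] at this
    change σ ^ 2 = 0 at this
    nlinarith
  have hM : ∀ x : ℝ, gaussianPDFReal 0 v x ≤ (Real.sqrt (2 * π) * σ)⁻¹ := by
    intro x
    unfold gaussianPDFReal
    have h1 : Real.sqrt (2 * π * v) = Real.sqrt (2 * π) * σ := by
      rw [hv_def]
      change Real.sqrt (2 * π * σ ^ 2) = _; rw [Real.sqrt_mul (by positivity), Real.sqrt_sq hσ.le]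
    rw [h1]
    have h2 : Real.exp (-(x - 0) ^ 2 / (2 * v)) ≤ 1 := by
      apply Real.exp_le_one_iff.mpr
      have : 0 < (v:ℝ) := by rw [hv_def]; change 0 < σ ^ 2; positivity
      exact div_nonpos_of_nonpos_of_nonneg (neg_nonpos.mpr (by positivity)) (by positivity)
    calc (Real.sqrt (2 * π) * σ)⁻¹ * Real.exp (-(x - 0) ^ 2 / (2 * v))
        ≤ (Real.sqrt (2 * π) * σ)⁻¹ * 1 := by
          apply mul_le_mul_of_nonneg_left h2
          positivity
      _ = (Real.sqrt (2 * π) * σ)⁻¹ := by ring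
  rw [gaussianReal_of_var_ne_zero 0 hv]
  have hmeaspdf : Measurable fun x => (gaussianPDFReal 0 v x).toNNReal :=
    (measurable_gaussianPDFReal 0 v).real_toNNReal
  have heq : (volume.withDensity (gaussianPDF 0 v))
      = volume.withDensity fun x => ((gaussianPDFReal 0 v x).toNNReal : ENNReal) := rfl
  rw [heq, integral_withDensity_eq_integral_smul hmeaspdf]
  have hintg : Integrable (fun x : ℝ =>
      (Real.sqrt (2 * π) * σ)⁻¹ * Real.exp (-(x + c) ^ 2 / h ^ 2)) volume := by
    apply Integrable.const_mul
    have : Integrable (fun x : ℝ => Real.exp (-(h ^ 2)⁻¹ * x ^ 2)) volume :=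
      integrable_exp_neg_mul_sq (by positivity)
    have h2 := this.comp_add_right c
    refine h2.congr ?_
    filter_upwards with x
    congr 1
    field_simp
  calc ∫ x, (gaussianPDFReal 0 v x).toNNReal • Real.exp (-(x + c) ^ 2 / h ^ 2)
      ≤ ∫ x, (Real.sqrt (2 * π) * σ)⁻¹ * Real.exp (-(x + c) ^ 2 / h ^ 2) := by
        apply integral_mono_of_nonneg _ hintg
        · filter_upwards with x
          simp only [NNReal.smul_def, smul_eq_mul]
          apply mul_le_mul_of_nonneg_right _ (Real.exp_nonneg _)
          rw [Real.coe_toNNReal _ (gaussianPDFReal_nonneg 0 v x)]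
          exact hM x
        · filter_upwards with x
          simp only [NNReal.smul_def, smul_eq_mul]
          positivity
    _ = (Real.sqrt (2 * π) * σ)⁻¹ * ∫ x, Real.exp (-(x + c) ^ 2 / h ^ 2) := by
        rw [integral_const_mul]
    _ = (Real.sqrt (2 * π) * σ)⁻¹ * ∫ x : ℝ, Real.exp (-x ^ 2 / h ^ 2) := by
        rw [integral_add_right_eq_self (fun x : ℝ => Real.exp (-x ^ 2 / h ^ 2)) c]
    _ = (Real.sqrt (2 * π) * σ)⁻¹ * ∫ x : ℝ, Real.exp (-(h ^ 2)⁻¹ * x ^ 2) := by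
        congr 1
        apply integral_congr_ae
        filter_upwards with x
        congr 1
        field_simp
    _ = (Real.sqrt (2 * π) * σ)⁻¹ * Real.sqrt (π / (h ^ 2)⁻¹) := by
        rw [integral_gaussian]
    _ = h * Real.sqrt π / (Real.sqrt (2 * π) * σ) := by
        rw [show π / (h ^ 2)⁻¹ = π * h ^ 2 by field_simp]
        rw [Real.sqrt_mul (by positivity) (h ^ 2), Real.sqrt_sq hh.le]
        ring

lemma gco_nonneg {σ lam h : ℝ} (hσ : 0 < σ) (hlam : 0 < lam) (hh : 0 < h) (y : ℝ) :
    0 ≤ gco σ lam h y := by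
  unfold gco
  have hind : (0:ℝ) ≤ if lam < |y| then 1 else 0 := by split_ifs <;> norm_num
  have hc : 0 ≤ lam * Real.sqrt (σ ^ 2 + h ^ 2) / (Real.sqrt (2 * π) * σ * h) := by positivity
  apply add_nonneg (sq_nonneg _)
  apply mul_nonneg (by positivity)
  exact add_nonneg hind (mul_nonneg hc (by positivity))

lemma gco_sq_le {σ lam h : ℝ} (hσ : 0 < σ) (hlam : 0 < lam) (hh : 0 < h) (y : ℝ) :
    (gco σ lam h y) ^ 2 ≤ 2 * (lam ^ 2 + 2 * σ ^ 2) ^ 2 +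
      4 * (2 * σ ^ 2 * (lam * Real.sqrt (σ ^ 2 + h ^ 2) / (Real.sqrt (2 * π) * σ * h))) ^ 2 *
        (Real.exp (-(y + lam) ^ 2 / h ^ 2) + Real.exp (-(y - lam) ^ 2 / h ^ 2)) := by
  set A : ℝ := lam ^ 2 + 2 * σ ^ 2 with hA
  set B : ℝ := 2 * σ ^ 2 * (lam * Real.sqrt (σ ^ 2 + h ^ 2) / (Real.sqrt (2 * π) * σ * h))
    with hB
  set ep : ℝ := Real.exp (-(y + lam) ^ 2 / (2 * h ^ 2)) with hep
  set em : ℝ := Real.exp (-(y - lam) ^ 2 / (2 * h ^ 2)) with hem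
  have hB0 : 0 ≤ B := by rw [hB]; positivity
  have he1 : ep ^ 2 = Real.exp (-(y + lam) ^ 2 / h ^ 2) := by
    calc ep ^ 2 = ep * ep := sq ep
      _ = Real.exp (-(y + lam) ^ 2 / (2 * h ^ 2) + -(y + lam) ^ 2 / (2 * h ^ 2)) :=
          (Real.exp_add _ _).symm
      _ = Real.exp (-(y + lam) ^ 2 / h ^ 2) := by congr 1; field_simp; ring
  have he2 : em ^ 2 = Real.exp (-(y - lam) ^ 2 / h ^ 2) := by
    calc em ^ 2 = em * em := sq em
      _ = Real.exp (-(y - lam) ^ 2 / (2 * h ^ 2) + -(y - lam) ^ 2 / (2 * h ^ 2)) :=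
          (Real.exp_add _ _).symm
      _ = Real.exp (-(y - lam) ^ 2 / h ^ 2) := by congr 1; field_simp; ring
  rw [← he1, ← he2]
  have hg0 : 0 ≤ gco σ lam h y := gco_nonneg hσ hlam hh y
  have hgle : gco σ lam h y ≤ A + B * ep + B * em := by
    unfold gco
    have hind : (if lam < |y| then (1:ℝ) else 0) ≤ 1 := by split_ifs <;> norm_num
    have h1 := sub_HT_sq_le hlam y
    have hep0 : 0 ≤ ep := Real.exp_nonneg _
    have hem0 : 0 ≤ em := Real.exp_nonneg _
    rw [hA, ← hep, ← hem]
    nlinarith [sq_nonneg σ, mul_le_mul_of_nonneg_left hind (by positivity : (0:ℝ) ≤ 2 * σ ^ 2)]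
  have hep0 : 0 ≤ ep := Real.exp_nonneg _
  have hem0 : 0 ≤ em := Real.exp_nonneg _
  nlinarith [mul_self_le_mul_self hg0 hgle, sq_nonneg (A - B * ep - B * em),
    sq_nonneg (B * ep - B * em)]

lemma gco_le_bound {σ lam h : ℝ} (hσ : 0 < σ) (hlam : 0 < lam) (hh : 0 < h) (y : ℝ) :
    gco σ lam h y ≤ (lam ^ 2 + 2 * σ ^ 2) +
      2 * (2 * σ ^ 2 * (lam * Real.sqrt (σ ^ 2 + h ^ 2) / (Real.sqrt (2 * π) * σ * h))) := by
  unfold gco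
  have hind : (if lam < |y| then (1:ℝ) else 0) ≤ 1 := by split_ifs <;> norm_num
  have h1 := sub_HT_sq_le hlam y
  have hc : 0 ≤ lam * Real.sqrt (σ ^ 2 + h ^ 2) / (Real.sqrt (2 * π) * σ * h) := by positivity
  have hep : Real.exp (-(y + lam) ^ 2 / (2 * h ^ 2)) ≤ 1 :=
    Real.exp_le_one_iff.mpr (div_nonpos_of_nonpos_of_nonneg (neg_nonpos.mpr (sq_nonneg _))
      (by positivity))
  have hem : Real.exp (-(y - lam) ^ 2 / (2 * h ^ 2)) ≤ 1 :=
    Real.exp_le_one_iff.mpr (div_nonpos_of_nonpos_of_nonneg (neg_nonpos.mpr (sq_nonneg _))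
      (by positivity))
  have hep0 : 0 ≤ Real.exp (-(y + lam) ^ 2 / (2 * h ^ 2)) := Real.exp_nonneg _
  have hem0 : 0 ≤ Real.exp (-(y - lam) ^ 2 / (2 * h ^ 2)) := Real.exp_nonneg _
  have t2 : lam * Real.sqrt (σ ^ 2 + h ^ 2) / (Real.sqrt (2 * π) * σ * h) *
      (Real.exp (-(y + lam) ^ 2 / (2 * h ^ 2)) + Real.exp (-(y - lam) ^ 2 / (2 * h ^ 2)))
      ≤ lam * Real.sqrt (σ ^ 2 + h ^ 2) / (Real.sqrt (2 * π) * σ * h) * 2 := by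
    apply mul_le_mul_of_nonneg_left _ hc
    linarith
  nlinarith [mul_le_mul_of_nonneg_left hind (by positivity : (0:ℝ) ≤ 2 * σ ^ 2),
    mul_le_mul_of_nonneg_left t2 (by positivity : (0:ℝ) ≤ 2 * σ ^ 2)]

lemma variance_add_const' {Ω : Type*} [MeasurableSpace Ω] {μ : Measure Ω}
    [IsProbabilityMeasure μ] {X : Ω → ℝ} (hX : Integrable X μ) (c : ℝ) :
    variance (fun ω => X ω + c) μ = variance X μ := by
  have hEc : (∫ x, (X x + c) ∂μ) = (∫ x, X x ∂μ) + c := by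
    rw [integral_add hX (integrable_const c), integral_const]
    simp
  unfold ProbabilityTheory.variance ProbabilityTheory.evariance
  congr 1
  apply lintegral_congr
  intro ω
  have h2 : X ω + c - ∫ x, (X x + c) ∂μ = X ω - ∫ x, X x ∂μ := by rw [hEc]; ring
  simp only []
  rw [h2]

/-- under the ℓ⁴ growth condition, the variance of `(1/P)·SCORE(Y, λ, h(P))`
vanishes as `P → ∞`. -/
theorem score_vanishing_variance
    {Ω : Type*} [MeasurableSpace Ω] (μpr : Measure Ω) [IsProbabilityMeasure μpr]
    (σ lam : ℝ) (hσ : 0 < σ) (hlam : 0 < lam)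
    (x0 : ℕ → ℝ)
    (hx0 : (fun P : ℕ => (∑ i ∈ Finset.range P, (x0 i) ^ 4) ^ ((1 : ℝ) / 4))
            =o[atTop] (fun P : ℕ => (P : ℝ) ^ ((1 : ℝ) / 2)))
    (W : ℕ → Ω → ℝ)
    (hmeas : ∀ i, Measurable (W i))
    (hindep : iIndepFun W μpr)
    (hdist : ∀ i, Measure.map (W i) μpr = gaussianReal 0 ⟨σ ^ 2, sq_nonneg σ⟩)
    (h : ℕ → ℝ) (hpos : ∀ P, 0 < h P)
    (hh0 : Tendsto h atTop (nhds 0))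
    (hPh : Tendsto (fun P : ℕ => 1 / ((P : ℝ) * h P)) atTop (nhds 0)) :
    Tendsto
      (fun P : ℕ =>
        variance (fun ω => (1 / (P : ℝ)) * SCORE σ lam (h P) P (fun i => x0 i + W i ω)) μpr)
      atTop (nhds 0) := by
  set A : ℝ := lam ^ 2 + 2 * σ ^ 2 with hA
  set K : ℝ := 2 * σ ^ 2 * (lam * Real.sqrt (σ ^ 2 + 1) / (Real.sqrt (2 * π) * σ)) with hK
  set D : ℝ := Real.sqrt π / (Real.sqrt (2 * π) * σ) with hD
  set L : ℝ := 8 * K ^ 2 * D with hL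
  have hD0 : 0 ≤ D := by rw [hD]; positivity
  have hbound : Tendsto (fun P : ℕ => 2 * A ^ 2 * (1 / (P : ℝ)) + L * (1 / ((P : ℝ) * h P)))
      atTop (nhds 0) := by
    have h1 := tendsto_one_div_atTop_nhds_zero_nat.const_mul (2 * A ^ 2)
    have h2 := hPh.const_mul L
    simpa using h1.add h2
  refine squeeze_zero' (Eventually.of_forall fun P => variance_nonneg _ _) ?_ hbound
  filter_upwards [eventually_ge_atTop 1, hh0.eventually_lt_const one_pos] with P hP1 hhP1
  have hhp : 0 < h P := hpos P
  have hP0 : (0:ℝ) < (P : ℝ) := by exact_mod_cast hP1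
  set B : ℝ := 2 * σ ^ 2 * (lam * Real.sqrt (σ ^ 2 + (h P) ^ 2) /
    (Real.sqrt (2 * π) * σ * h P)) with hB
  have hB0 : 0 ≤ B := by rw [hB]; positivity
  set Z : ℕ → Ω → ℝ := fun i ω => gco σ lam (h P) (x0 i + W i ω) with hZ
  have hZmeas : ∀ i, Measurable (Z i) := fun i =>
    (measurable_gco σ lam (h P)).comp (measurable_const.add (hmeas i))
  have hZmem : ∀ i, MemLp (Z i) 2 μpr := by
    intro i
    apply MemLp.of_bound (hZmeas i).aestronglyMeasurable (A + 2 * B)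
    filter_upwards with ω
    rw [Real.norm_eq_abs, abs_of_nonneg (gco_nonneg hσ hlam hhp _)]
    exact gco_le_bound hσ hlam hhp _
  -- the key per-coordinate second moment bound
  have hvarZ : ∀ i ∈ Finset.range P, variance (Z i) μpr ≤ 2 * A ^ 2 + L * (1 / h P) := by
    intro i _
    have hintexp : ∀ c : ℝ,
        Integrable (fun ω => Real.exp (-(x0 i + W i ω + c) ^ 2 / (h P) ^ 2)) μpr := by
      intro c
      have hm : Measurable fun ω => Real.exp (-(x0 i + W i ω + c) ^ 2 / (h P) ^ 2) := by
        fun_prop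
      apply memLp_one_iff_integrable.mp
      apply MemLp.of_bound hm.aestronglyMeasurable 1
      filter_upwards with ω
      rw [Real.norm_eq_abs, abs_of_nonneg (Real.exp_nonneg _)]
      exact Real.exp_le_one_iff.mpr (div_nonpos_of_nonpos_of_nonneg
        (neg_nonpos.mpr (sq_nonneg _)) (sq_nonneg _))
    have hintval : ∀ c : ℝ,
        ∫ ω, Real.exp (-(x0 i + W i ω + c) ^ 2 / (h P) ^ 2) ∂μpr ≤ h P * D := by
      intro c
      have hgm : Measurable fun w : ℝ => Real.exp (-(w + (x0 i + c)) ^ 2 / (h P) ^ 2) := by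
        fun_prop
      have heqf : (fun ω => Real.exp (-(x0 i + W i ω + c) ^ 2 / (h P) ^ 2))
          = (fun w : ℝ => Real.exp (-(w + (x0 i + c)) ^ 2 / (h P) ^ 2)) ∘ (W i) := by
        funext ω
        simp only [Function.comp_apply]
        congr 2
        ring
      have hmapeq := integral_map (μ := μpr) (φ := W i)
        (f := fun w : ℝ => Real.exp (-(w + (x0 i + c)) ^ 2 / (h P) ^ 2))
        (hmeas i).aemeasurable hgm.aestronglyMeasurable
      rw [hdist i] at hmapeq
      rw [hD]
      calc ∫ ω, Real.exp (-(x0 i + W i ω + c) ^ 2 / (h P) ^ 2) ∂μpr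
          = ∫ w, Real.exp (-(w + (x0 i + c)) ^ 2 / (h P) ^ 2)
              ∂(gaussianReal 0 ⟨σ ^ 2, sq_nonneg σ⟩) := by
            rw [heqf]
            exact hmapeq.symm
        _ ≤ h P * Real.sqrt π / (Real.sqrt (2 * π) * σ) := gauss_exp_bound hσ hhp (x0 i + c)
        _ = h P * (Real.sqrt π / (Real.sqrt (2 * π) * σ)) := by ring
    -- the minus variant
    have hintexp' : Integrable (fun ω => Real.exp (-(x0 i + W i ω - lam) ^ 2 / (h P) ^ 2))
        μpr := by
      have := hintexp (-lam)
      refine this.congr ?_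
      filter_upwards with ω
      congr 2 <;> ring
    have hintval' : ∫ ω, Real.exp (-(x0 i + W i ω - lam) ^ 2 / (h P) ^ 2) ∂μpr ≤ h P * D := by
      have heqf : (fun ω => Real.exp (-(x0 i + W i ω - lam) ^ 2 / (h P) ^ 2))
          = (fun ω => Real.exp (-(x0 i + W i ω + (-lam)) ^ 2 / (h P) ^ 2)) := by
        funext ω
        congr 2 <;> ring
      rw [heqf]
      exact hintval (-lam)
    have hsq : variance (Z i) μpr ≤ ∫ ω, (Z i ω) ^ 2 ∂μpr := by
      have := variance_le_expectation_sq (μ := μpr) (hZmeas i).aestronglyMeasurable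
      simpa using this
    have hmom : ∫ ω, (Z i ω) ^ 2 ∂μpr ≤ 2 * A ^ 2 + 4 * B ^ 2 * (h P * D + h P * D) := by
      have hadd : Integrable (fun ω => Real.exp (-(x0 i + W i ω + lam) ^ 2 / (h P) ^ 2) +
          Real.exp (-(x0 i + W i ω - lam) ^ 2 / (h P) ^ 2)) μpr := (hintexp lam).add hintexp'
      have hint3 : Integrable (fun ω => 4 * B ^ 2 *
          (Real.exp (-(x0 i + W i ω + lam) ^ 2 / (h P) ^ 2) +
            Real.exp (-(x0 i + W i ω - lam) ^ 2 / (h P) ^ 2))) μpr := hadd.const_mul _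
      have hint2 : Integrable (fun ω => 2 * A ^ 2 + 4 * B ^ 2 *
          (Real.exp (-(x0 i + W i ω + lam) ^ 2 / (h P) ^ 2) +
            Real.exp (-(x0 i + W i ω - lam) ^ 2 / (h P) ^ 2))) μpr :=
        (integrable_const _).add hint3
      calc ∫ ω, (Z i ω) ^ 2 ∂μpr
          ≤ ∫ ω, (2 * A ^ 2 + 4 * B ^ 2 *
              (Real.exp (-(x0 i + W i ω + lam) ^ 2 / (h P) ^ 2) +
                Real.exp (-(x0 i + W i ω - lam) ^ 2 / (h P) ^ 2))) ∂μpr := by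
            apply integral_mono_of_nonneg (Eventually.of_forall fun ω => sq_nonneg _) hint2
            filter_upwards with ω
            exact gco_sq_le hσ hlam hhp (x0 i + W i ω)
        _ = 2 * A ^ 2 + 4 * B ^ 2 *
              ((∫ ω, Real.exp (-(x0 i + W i ω + lam) ^ 2 / (h P) ^ 2) ∂μpr) +
                ∫ ω, Real.exp (-(x0 i + W i ω - lam) ^ 2 / (h P) ^ 2) ∂μpr) := by
            rw [integral_add (integrable_const _) hint3, integral_const, integral_const_mul,
              integral_add (hintexp lam) hintexp']
            simp
        _ ≤ 2 * A ^ 2 + 4 * B ^ 2 * (h P * D + h P * D) := by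
            have h1 := hintval lam
            have h2 := hintval'
            have : (∫ ω, Real.exp (-(x0 i + W i ω + lam) ^ 2 / (h P) ^ 2) ∂μpr) +
                ∫ ω, Real.exp (-(x0 i + W i ω - lam) ^ 2 / (h P) ^ 2) ∂μpr
                ≤ h P * D + h P * D := add_le_add h1 h2
            have h4 : (0:ℝ) ≤ 4 * B ^ 2 := by positivity
            exact add_le_add_right (mul_le_mul_of_nonneg_left this h4) _
    have hBK : B ^ 2 * h P ≤ K ^ 2 / h P := by
      have hs : Real.sqrt (σ ^ 2 + (h P) ^ 2) ≤ Real.sqrt (σ ^ 2 + 1) :=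
        Real.sqrt_le_sqrt (by nlinarith)
      have hBhp : B * h P ≤ K := by
        have hchain : B * h P = 2 * σ ^ 2 * (lam * Real.sqrt (σ ^ 2 + (h P) ^ 2) /
            (Real.sqrt (2 * π) * σ)) := by
          rw [hB]
          have hπ : (0:ℝ) < Real.sqrt (2 * π) := Real.sqrt_pos.mpr (by positivity)
          field_simp
        rw [hchain, hK]
        gcongr
      rw [le_div_iff₀ hhp]
      have h4 : (B * h P) * (B * h P) ≤ K * K :=
        mul_self_le_mul_self (mul_nonneg hB0 hhp.le) hBhp
      calc B ^ 2 * h P * h P = (B * h P) * (B * h P) := by ring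
        _ ≤ K * K := h4
        _ = K ^ 2 := (sq K).symm
    calc variance (Z i) μpr ≤ ∫ ω, (Z i ω) ^ 2 ∂μpr := hsq
      _ ≤ 2 * A ^ 2 + 4 * B ^ 2 * (h P * D + h P * D) := hmom
      _ = 2 * A ^ 2 + 8 * (B ^ 2 * h P) * D := by ring
      _ ≤ 2 * A ^ 2 + 8 * (K ^ 2 / h P) * D := by
          have h8 : (0:ℝ) ≤ (8:ℝ) := by norm_num
          exact add_le_add_right (mul_le_mul_of_nonneg_right
            (mul_le_mul_of_nonneg_left hBK h8) hD0) _
      _ = 2 * A ^ 2 + L * (1 / h P) := by rw [hL]; ring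
  -- rewrite the variance of the normalized SCORE
  have hint1 : Integrable (fun ω => (1 / (P:ℝ)) * ∑ i ∈ Finset.range P, Z i ω) μpr := by
    apply Integrable.const_mul
    exact integrable_finset_sum _ fun i _ => ((hZmem i).integrable one_le_two)
  have hfun : (fun ω => (1 / (P : ℝ)) * SCORE σ lam (h P) P (fun i => x0 i + W i ω))
      = fun ω => ((1 / (P:ℝ)) * ∑ i ∈ Finset.range P, Z i ω) + (-(σ ^ 2)) := by
    funext ω
    rw [score_eq]
    have : (P:ℝ) ≠ 0 := ne_of_gt hP0
    field_simp
    ring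
  have hsum_eq : (fun ω => ∑ i ∈ Finset.range P, Z i ω) = ∑ i ∈ Finset.range P, Z i := by
    funext ω
    simp
  have hvs : variance (fun ω => ∑ i ∈ Finset.range P, Z i ω) μpr
      = ∑ i ∈ Finset.range P, variance (Z i) μpr := by
    rw [hsum_eq]
    apply IndepFun.variance_sum (fun i _ => hZmem i)
    intro i _ j _ hij
    have := (hindep.indepFun hij).comp
      (φ := fun w : ℝ => gco σ lam (h P) (x0 i + w))
      (ψ := fun w : ℝ => gco σ lam (h P) (x0 j + w))
      ((measurable_gco σ lam (h P)).comp (measurable_const.add measurable_id))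
      ((measurable_gco σ lam (h P)).comp (measurable_const.add measurable_id))
    exact this
  calc variance (fun ω => (1 / (P : ℝ)) * SCORE σ lam (h P) P (fun i => x0 i + W i ω)) μpr
      = variance (fun ω => (1 / (P:ℝ)) * ∑ i ∈ Finset.range P, Z i ω) μpr := by
        rw [hfun, variance_add_const' hint1]
    _ = (1 / (P:ℝ)) ^ 2 * variance (fun ω => ∑ i ∈ Finset.range P, Z i ω) μpr :=
        variance_const_mul _ _ _
    _ = (1 / (P:ℝ)) ^ 2 * ∑ i ∈ Finset.range P, variance (Z i) μpr := by rw [hvs]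
    _ ≤ (1 / (P:ℝ)) ^ 2 * ((P:ℝ) * (2 * A ^ 2 + L * (1 / h P))) := by
        apply mul_le_mul_of_nonneg_left _ (by positivity)
        calc ∑ i ∈ Finset.range P, variance (Z i) μpr
            ≤ ∑ _i ∈ Finset.range P, (2 * A ^ 2 + L * (1 / h P)) := Finset.sum_le_sum hvarZ
          _ = (P:ℝ) * (2 * A ^ 2 + L * (1 / h P)) := by
              rw [Finset.sum_const, Finset.card_range, nsmul_eq_mul]
    _ = 2 * A ^ 2 * (1 / (P:ℝ)) + L * (1 / ((P:ℝ) * h P)) := by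
        have h1 : (P:ℝ) ≠ 0 := ne_of_gt hP0
        have h2 : h P ≠ 0 := ne_of_gt hhp
        field_simp
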